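/- ℓ_C → 0 as C → −∞, where ℓ_C = ∫_1^{√(1+e^{2C})} du / √(2C − log(u² − 1)). -/

import Mathlib

open MeasureTheory intervalIntegral Real Filter

noncomputable def ell (C : ℝ) : ℝ :=
  ∫ u in (1 : ℝ)..Real.sqrt (1 + Real.exp (2 * C)),
    (Real.sqrt (2 * C - Real.log (u ^ 2 - 1)))⁻¹

lemma ell_norm_le (C : ℝ) : ‖ell C‖ ≤ Real.exp (2 * C) := by
  set e := Real.exp (2 * C) with he
  have hepos : (0 : ℝ) < e := Real.exp_pos _
  have hesq : e = Real.exp C ^ 2 := by rw [he, sq, ← Real.exp_add]; ring_nf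
  have hsqe : Real.sqrt e = Real.exp C := by
    rw [hesq, Real.sqrt_sq (Real.exp_pos C).le]
  set b := Real.sqrt (1 + e) with hbdef
  have hb2 : b ^ 2 = 1 + e := Real.sq_sqrt (by positivity)
  have hb1 : 1 ≤ b := by nlinarith [Real.sqrt_nonneg (1 + e), hb2]
  set g : ℝ → ℝ := fun u => Real.exp C * (Real.sqrt 2)⁻¹ * (b - u) ^ (-(1/2) : ℝ) with hg
  have hgint : IntervalIntegrable g volume 1 b := by
    have h1 : IntervalIntegrable (fun x : ℝ => x ^ (-(1/2) : ℝ)) volume 0 (b - 1) :=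
      intervalIntegral.intervalIntegrable_rpow' (by norm_num)
    have h2 := h1.comp_sub_left b
    simp only [sub_zero, sub_sub_cancel] at h2
    exact h2.symm.const_mul _
  have hbound : ∀ᵐ u ∂(volume.restrict (Set.uIoc (1:ℝ) b)),
      ‖(Real.sqrt (2 * C - Real.log (u ^ 2 - 1)))⁻¹‖ ≤ g u := by
    refine Filter.eventually_of_mem (self_mem_ae_restrict measurableSet_uIoc) fun u hu => ?_
    rw [Set.uIoc_of_le hb1] at hu
    obtain ⟨hu1, hub⟩ := hu
    rcases eq_or_lt_of_le hub with heq | hlt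
    · have hlog0 : 2 * C - Real.log (u ^ 2 - 1) = 0 := by
        rw [heq, hb2]; simp [he]
      rw [hlog0]
      simp [hg, heq, Real.zero_rpow (by norm_num : (-(1/2) : ℝ) ≠ 0)]
    · have hu2 : (0:ℝ) < u ^ 2 - 1 := by nlinarith
      have hbu : (0:ℝ) < b - u := by linarith
      have hkey : 2 * (b - u) / e ≤ 2 * C - Real.log (u ^ 2 - 1) := by
        have hlog : Real.log ((u ^ 2 - 1) / e) ≤ (u ^ 2 - 1) / e - 1 :=
          Real.log_le_sub_one_of_pos (by positivity)
        rw [Real.log_div (by positivity) (by positivity), Real.log_exp] at hlog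
        have h2u : 2 * (b - u) ≤ b ^ 2 - u ^ 2 := by nlinarith
        rw [div_le_iff₀ hepos]
        nlinarith [mul_le_mul_of_nonneg_right hlog hepos.le,
          div_mul_cancel₀ (u ^ 2 - 1) hepos.ne']
      have hDpos : (0:ℝ) < 2 * (b - u) / e := by positivity
      have hsq : Real.sqrt (2 * (b - u) / e) ≤ Real.sqrt (2 * C - Real.log (u ^ 2 - 1)) :=
        Real.sqrt_le_sqrt hkey
      have hsqpos : 0 < Real.sqrt (2 * (b - u) / e) := Real.sqrt_pos.2 hDpos
      have hinv : (Real.sqrt (2 * C - Real.log (u ^ 2 - 1)))⁻¹ ≤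
          (Real.sqrt (2 * (b - u) / e))⁻¹ := inv_anti₀ hsqpos hsq
      have hnorm : ‖(Real.sqrt (2 * C - Real.log (u ^ 2 - 1)))⁻¹‖ =
          (Real.sqrt (2 * C - Real.log (u ^ 2 - 1)))⁻¹ := by
        rw [Real.norm_eq_abs, abs_of_nonneg]; positivity
      rw [hnorm]
      refine hinv.trans (le_of_eq ?_)
      have hrw1 : Real.sqrt (2 * (b - u) / e) = Real.sqrt 2 * Real.sqrt (b - u) / Real.exp C := by
        rw [Real.sqrt_div (by positivity), Real.sqrt_mul (by norm_num : (0:ℝ) ≤ 2), hsqe]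
      have hrw2 : (b - u) ^ (-(1/2) : ℝ) = (Real.sqrt (b - u))⁻¹ := by
        rw [Real.rpow_neg hbu.le, Real.sqrt_eq_rpow]
      show (Real.sqrt (2 * (b - u) / e))⁻¹ =
        Real.exp C * (Real.sqrt 2)⁻¹ * (b - u) ^ (-(1/2) : ℝ)
      rw [hrw1, hrw2]
      have h2pos : (0:ℝ) < Real.sqrt 2 := Real.sqrt_pos.2 (by norm_num)
      have hbupos : (0:ℝ) < Real.sqrt (b - u) := Real.sqrt_pos.2 hbu
      field_simp
  have hmain := intervalIntegral.norm_integral_le_abs_of_norm_le hbound hgint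
  have hval : (∫ u in (1:ℝ)..b, g u) =
      Real.exp C * (Real.sqrt 2)⁻¹ * (2 * Real.sqrt (b - 1)) := by
    rw [hg]
    rw [intervalIntegral.integral_const_mul]
    have hcomp : (∫ u in (1:ℝ)..b, (b - u) ^ (-(1/2) : ℝ))
        = ∫ x in (b - b)..(b - 1), x ^ (-(1/2) : ℝ) :=
      intervalIntegral.integral_comp_sub_left (fun x => x ^ (-(1/2) : ℝ)) b
    rw [hcomp, sub_self, integral_rpow (Or.inl (by norm_num))]
    rw [Real.zero_rpow (by norm_num : (-(1/2) : ℝ) + 1 ≠ 0)]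
    norm_num
    rw [Real.sqrt_eq_rpow]
    ring
  have hb_le : b - 1 ≤ e / 2 := by
    have : b ≤ 1 + e / 2 := by
      have h1 : (1 + e) ≤ (1 + e / 2) ^ 2 := by nlinarith
      calc b ≤ Real.sqrt ((1 + e / 2) ^ 2) := Real.sqrt_le_sqrt h1
        _ = 1 + e / 2 := Real.sqrt_sq (by positivity)
    linarith
  have hsb : Real.sqrt (b - 1) ≤ Real.exp C / Real.sqrt 2 := by
    calc Real.sqrt (b - 1) ≤ Real.sqrt (e / 2) := Real.sqrt_le_sqrt hb_le
      _ = Real.exp C / Real.sqrt 2 := by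
          rw [Real.sqrt_div hepos.le, hsqe]
  have hfin : |∫ u in (1:ℝ)..b, g u| ≤ e := by
    rw [hval, abs_of_nonneg (by positivity)]
    have h2 : Real.sqrt 2 * Real.sqrt 2 = 2 := Real.mul_self_sqrt (by norm_num)
    have h2pos : (0:ℝ) < Real.sqrt 2 := Real.sqrt_pos.2 (by norm_num)
    have step : Real.exp C * (Real.sqrt 2)⁻¹ * (2 * Real.sqrt (b - 1)) ≤
        Real.exp C * (Real.sqrt 2)⁻¹ * (2 * (Real.exp C / Real.sqrt 2)) := by
      have hnn : 0 ≤ Real.exp C * (Real.sqrt 2)⁻¹ := by positivity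
      nlinarith [Real.exp_pos C]
    refine step.trans (le_of_eq ?_)
    rw [hesq]
    field_simp
    nlinarith [h2]
  exact hmain.trans hfin

theorem ell_tendsto_zero_atBot :
    Filter.Tendsto ell Filter.atBot (nhds 0) := by
  apply squeeze_zero_norm ell_norm_le
  have h : Tendsto (fun C : ℝ => 2 * C) atBot atBot :=
    Tendsto.const_mul_atBot (by norm_num) tendsto_id
  exact Real.tendsto_exp_atBot.comp h
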